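/- Let V ⊆ ℤ^d be partitioned into cells Q_a = φ^{-1}(a) ∩ V where φ : ℤ^d → ℤ^d is monotone (a ≤ b implies φ(a) ≤ φ(b)). Let a₁, ..., a_q enumerate the nonempty cell indices, and suppose both {a₁,...,a_{i-1}} and {a₁,...,a_i} are monotone (downward-closed under componentwise ≤) in {a₁,...,a_q}. If W is monotone in Q_{a_i}, then Q_{a_1} ∪ ... ∪ Q_{a_{i-1}} ∪ W is monotone in V. -/
import Mathlib


/-- `S` is monotone (downward closed under the componentwise order) in `T`. -/
def MonotoneIn {d : ℕ} (S T : Set (Fin d → ℤ)) : Prop :=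
  ∀ x ∈ T, ∀ y ∈ S, x ≤ y → x ∈ S

/-- Lemma `lemmon`: a lexicographic prefix of coarse cells together with a
monotone subset of the next cell is monotone in `V`. -/
theorem stmt13 (d : ℕ) (V : Set (Fin d → ℤ)) (φ : (Fin d → ℤ) → (Fin d → ℤ))
    (hφ : Monotone φ) (q : ℕ) (a : Fin q → (Fin d → ℤ)) (hinj : Function.Injective a)
    (hrange : φ '' V = Set.range a) (i : Fin q)
    (hpre1 : MonotoneIn (a '' {j | j < i}) (Set.range a))
    (hpre2 : MonotoneIn (a '' {j | j ≤ i}) (Set.range a))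
    (W : Set (Fin d → ℤ)) (hW : W ⊆ {x ∈ V | φ x = a i})
    (hWmono : MonotoneIn W {x ∈ V | φ x = a i}) :
    MonotoneIn ((⋃ j ∈ {j : Fin q | j < i}, {x ∈ V | φ x = a j}) ∪ W) V := by
  intro x hx y hy hxy
  have hφx : φ x ∈ Set.range a := by
    rw [← hrange]; exact ⟨x, hx, rfl⟩
  rcases hy with hy | hy
  · -- y in a cell a j, j < i
    simp only [Set.mem_iUnion] at hy
    obtain ⟨j, hj, hyV, hyφ⟩ := hy
    have hle : φ x ≤ a j := hyφ ▸ hφ hxy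
    have : φ x ∈ a '' {j | j < i} :=
      hpre1 (φ x) hφx (a j) ⟨j, hj, rfl⟩ hle
    obtain ⟨k, hk, hkeq⟩ := this
    left
    simp only [Set.mem_iUnion]
    exact ⟨k, hk, hx, hkeq.symm⟩
  · -- y ∈ W
    obtain ⟨hyV, hyφ⟩ := hW hy
    have hle : φ x ≤ a i := hyφ ▸ hφ hxy
    have : φ x ∈ a '' {j | j ≤ i} :=
      hpre2 (φ x) hφx (a i) ⟨i, le_refl i, rfl⟩ hle
    obtain ⟨k, hk, hkeq⟩ := this
    simp only [Set.mem_setOf_eq] at hk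
    rcases hk.lt_or_eq with hk | hk
    · left
      simp only [Set.mem_iUnion]
      exact ⟨k, hk, hx, hkeq.symm⟩
    · right
      exact hWmono x ⟨hx, hk ▸ hkeq.symm⟩ y hy hxy
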